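/- arXiv:2601.01622 — 5 statements merged into one kernel-verified Lean document; each statement's English description precedes it below -/
import Mathlib

section
/- Conversely, if X is a standard normal random variable, then its weight function ω_X(x) = Cov(1[X ≥ x], X)/Var(X) coincides with its density for all x. Combined with the previous statement, among random variables with differentiable density vanishing at infinity and finite second moments, ω_X = f_X holds if and only if X is Gaussian (up to scaling). -/
open MeasureTheory Set Real

/-- (Lemma 2 combined.) Among (normalized, mean-zero, unit-variance)
random variables with differentiable density `f` vanishing at infinity and finite
second moment, the LP weight function coincides with the density, i.e.
`∫_x^∞ z f(z) dz = f(x)` for all `x`, if and only if the density is the standard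
normal density, i.e. the variable is Gaussian. -/
theorem weight_eq_density_iff_gaussian (f : ℝ → ℝ)
    (hf : ContDiff ℝ 1 f)
    (hf0 : ∀ x, 0 ≤ f x)
    (htop : Filter.Tendsto f Filter.atTop (nhds 0))
    (hbot : Filter.Tendsto f Filter.atBot (nhds 0))
    (hint : ∫ x : ℝ, f x = 1)
    (hmom2 : Integrable (fun x => x ^ 2 * f x))
    (hmean : ∫ x : ℝ, x * f x = 0)
    (hvar : ∫ x : ℝ, x ^ 2 * f x = 1) :
    (∀ x : ℝ, ∫ z in Set.Ici x, z * f z = f x) ↔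
      (∀ x : ℝ, f x = (Real.sqrt (2 * Real.pi))⁻¹ * Real.exp (-x ^ 2 / 2)) := by
  have hπ : (0:ℝ) < Real.sqrt (2 * Real.pi) :=
    Real.sqrt_pos.mpr (by positivity)
  constructor
  · intro hw
    -- f is integrable (else the integral would be 0, not 1)
    have hf_int : Integrable f := by
      by_contra h
      rw [integral_undef h] at hint
      norm_num at hint
    have hfc : Continuous f := hf.continuous
    have hHc : Continuous (fun z : ℝ => z * f z) := continuous_id.mul hfc
    have hH_int : Integrable (fun z : ℝ => z * f z) := by
      refine (hf_int.add hmom2).mono hHc.aestronglyMeasurable ?_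
      filter_upwards with z
      have h1 : ‖z * f z‖ = |z| * f z := by
        rw [norm_mul, Real.norm_eq_abs, Real.norm_eq_abs, abs_of_nonneg (hf0 z)]
      have h2 : |z| ≤ 1 + z ^ 2 := by nlinarith [abs_nonneg z, sq_abs z]
      have h3 : |z| * f z ≤ (1 + z ^ 2) * f z :=
        mul_le_mul_of_nonneg_right h2 (hf0 z)
      have h4 : (0:ℝ) ≤ f z + z ^ 2 * f z :=
        add_nonneg (hf0 z) (mul_nonneg (sq_nonneg z) (hf0 z))
      simp only [Pi.add_apply]
      rw [h1, Real.norm_eq_abs, abs_of_nonneg h4]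
      nlinarith
    -- key formula : f x = f 0 - ∫ 0..x z f z
    have key : ∀ x : ℝ, f x = f 0 - ∫ z in (0:ℝ)..x, z * f z := by
      intro x
      have h1 : ∀ a : ℝ, f a = (∫ z : ℝ, z * f z) - ∫ z in Iic a, z * f z := by
        intro a
        have := intervalIntegral.integral_Iic_add_Ioi (b := a) hH_int.integrableOn hH_int.integrableOn
        rw [← hw a, integral_Ici_eq_integral_Ioi]
        linarith
      rw [h1 x, h1 0,
        ← intervalIntegral.integral_Iic_sub_Iic hH_int.integrableOn hH_int.integrableOn]
      ring
    -- hence f has derivative -(x f x)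
    have hd : ∀ x : ℝ, HasDerivAt f (-(x * f x)) x := by
      intro x
      have h1 : HasDerivAt (fun u : ℝ => ∫ z in (0:ℝ)..u, z * f z) (x * f x) x :=
        intervalIntegral.integral_hasDerivAt_right hH_int.intervalIntegrable
          hHc.aestronglyMeasurable.stronglyMeasurableAtFilter hHc.continuousAt
      have h2 := h1.const_sub (f 0)
      exact h2.congr_of_eventuallyEq (Filter.Eventually.of_forall fun u => key u)
    -- solve the ODE: f x * exp (x^2/2) is constant
    have hconst : ∀ x : ℝ, f x * Real.exp (x ^ 2 / 2) = f 0 := by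
      have hdg : ∀ x : ℝ, HasDerivAt (fun x => f x * Real.exp (x ^ 2 / 2)) 0 x := by
        intro x
        have he : HasDerivAt (fun x : ℝ => Real.exp (x ^ 2 / 2))
            (x * Real.exp (x ^ 2 / 2)) x := by
          have hp : HasDerivAt (fun x : ℝ => x ^ 2 / 2) x x := by
            have := (hasDerivAt_pow 2 x).div_const 2
            refine this.congr_deriv ?_
            push_cast
            ring
          have := hp.exp
          convert this using 1
          ring
        have := (hd x).mul he
        refine this.congr_deriv ?_
        ring
      have hdiff : Differentiable ℝ (fun x => f x * Real.exp (x ^ 2 / 2)) :=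
        fun x => (hdg x).differentiableAt
      have hz : ∀ x, deriv (fun x => f x * Real.exp (x ^ 2 / 2)) x = 0 :=
        fun x => (hdg x).deriv
      intro x
      have := is_const_of_deriv_eq_zero hdiff hz x 0
      simpa using this
    have hform : ∀ x : ℝ, f x = f 0 * Real.exp (-x ^ 2 / 2) := by
      intro x
      have h := hconst x
      have hepos : (0:ℝ) < Real.exp (x ^ 2 / 2) := Real.exp_pos _
      have : f x = f 0 / Real.exp (x ^ 2 / 2) := by
        field_simp at h ⊢
        linarith
      rw [this, neg_div, Real.exp_neg, div_eq_mul_inv]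
    -- compute f 0 from the normalization
    have hgauss : (∫ x : ℝ, Real.exp (-x ^ 2 / 2)) = Real.sqrt (2 * Real.pi) := by
      have h := integral_gaussian (1/2 : ℝ)
      have heq : ∀ x : ℝ, Real.exp (-(1/2 : ℝ) * x ^ 2) = Real.exp (-x ^ 2 / 2) := by
        intro x; ring_nf
      rw [show (π / (1/2 : ℝ)) = 2 * π by ring] at h
      rw [← h]
      exact integral_congr_ae (Filter.Eventually.of_forall fun x => (heq x).symm)
    have hf0val : f 0 = (Real.sqrt (2 * Real.pi))⁻¹ := by
      have h1 : (∫ x : ℝ, f x) = f 0 * Real.sqrt (2 * Real.pi) := by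
        calc (∫ x : ℝ, f x) = ∫ x : ℝ, f 0 * Real.exp (-x ^ 2 / 2) :=
              integral_congr_ae (Filter.Eventually.of_forall hform)
          _ = f 0 * ∫ x : ℝ, Real.exp (-x ^ 2 / 2) := integral_const_mul _ _
          _ = f 0 * Real.sqrt (2 * Real.pi) := by rw [hgauss]
      rw [hint] at h1
      exact eq_inv_of_mul_eq_one_left h1.symm
    intro x
    rw [hform x, hf0val]
  · intro hg x
    set c : ℝ := (Real.sqrt (2 * Real.pi))⁻¹ with hc
    have hderiv : ∀ z : ℝ, HasDerivAt (fun z : ℝ => -(c * Real.exp (-z ^ 2 / 2)))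
        (z * f z) z := by
      intro z
      have hp : HasDerivAt (fun z : ℝ => -z ^ 2 / 2) (-z) z := by
        have := ((hasDerivAt_pow 2 z).neg).div_const 2
        refine this.congr_deriv ?_
        push_cast
        ring
      have := ((hp.exp.const_mul c).neg)
      refine this.congr_deriv ?_
      rw [hg z]
      ring
    have hint2 : IntegrableOn (fun z : ℝ => z * f z) (Ioi x) := by
      have h1 : Integrable (fun z : ℝ => z * Real.exp (-(1/2 : ℝ) * z ^ 2)) :=
        integrable_mul_exp_neg_mul_sq (by norm_num)
      have h2 : Integrable (fun z : ℝ => z * f z) := by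
        have := (h1.const_mul c)
        refine this.congr (Filter.Eventually.of_forall fun z => ?_)
        simp only [hg]
        rw [show (-(1/2:ℝ) * z ^ 2) = -z ^ 2 / 2 by ring]
        ring
      exact h2.integrableOn
    have htend : Filter.Tendsto (fun z : ℝ => -(c * Real.exp (-z ^ 2 / 2)))
        Filter.atTop (nhds 0) := by
      have : Filter.Tendsto f Filter.atTop (nhds 0) := htop
      have heq : (fun z : ℝ => -(c * Real.exp (-z ^ 2 / 2))) = fun z => -f z := by
        funext z; rw [hg z]
      rw [heq]
      simpa using this.neg
    have := integral_Ioi_of_hasDerivAt_of_tendsto' (fun z _ => hderiv z) hint2 htend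
    rw [integral_Ici_eq_integral_Ioi, this, hg x]
    ring
end

section
/- (Continuous state interaction.) Let S be a random state independent of a mean-zero shock X with 0 < E[X²] < ∞, let f̃: S-space → ℝ be measurable with Var(f̃(S)) > 0 and all relevant second moments finite. Define θ(s) = E[YX | S=s]/E[X²]. Then the population coefficient β₁ of S·f̃-interaction in the regression of Y on (X, f̃(S)X) satisfies β₁ = Cov(f̃(S), θ(S)) / Var(f̃(S)). In particular, β₁ = 0 iff f̃(S) and θ(S) are uncorrelated. -/
open MeasureTheory ProbabilityTheory Set

lemma l2_mul_integrable {Ω : Type*} [MeasurableSpace Ω] {μ : Measure Ω}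
    {f g : Ω → ℝ} (hf : MemLp f 2 μ) (hg : MemLp g 2 μ) :
    Integrable (fun ω => f ω * g ω) μ := by
  have h : MemLp (f • g) 1 μ := by
    exact MemLp.smul hg hf
  rw [memLp_one_iff_integrable] at h
  exact h


/-- (Continuous state interaction.) With a state `S` independent of the
mean-zero shock `X`, the population interaction coefficient `β₁` of the regression of
`Y` on `(X, f̃(S)X)` — characterized by the normal equations — satisfies
`β₁ = Cov(f̃(S), θ(S)) / Var(f̃(S))`, where `θ(s) = E[YX | S = s]/E[X²]`. -/
theorem continuous_state_lp {Ω 𝒮 : Type*} [MeasurableSpace Ω]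
    [m𝒮 : MeasurableSpace 𝒮] (μ : Measure Ω) [IsProbabilityMeasure μ]
    (S : Ω → 𝒮) (ftil : 𝒮 → ℝ) (X Y : Ω → ℝ) (θ : 𝒮 → ℝ)
    (hSm : Measurable S) (hXm : Measurable X) (hYm : Measurable Y)
    (hfm : Measurable ftil)
    (hindep : IndepFun X S μ)
    (hmean : ∫ ω, X ω ∂μ = 0)
    (hX2 : Integrable (fun ω => X ω ^ 2) μ)
    (hvar : 0 < ∫ ω, X ω ^ 2 ∂μ)
    (hY2 : Integrable (fun ω => Y ω ^ 2) μ)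
    (hf2 : Integrable (fun ω => (ftil (S ω)) ^ 2) μ)
    (hfX2 : Integrable (fun ω => (ftil (S ω) * X ω) ^ 2) μ)
    (hθ2 : Integrable (fun ω => (θ (S ω)) ^ 2) μ)
    (hvarf : 0 < (∫ ω, (ftil (S ω)) ^ 2 ∂μ) - (∫ ω, ftil (S ω) ∂μ) ^ 2)
    -- `θ(s) = E[YX | S = s]/E[X²]`, stated via conditional expectation given `σ(S)`
    -- (using that independence gives `E[X² | S] = E[X²]`):
    (hθ : ∀ᵐ ω ∂μ,
      (μ[fun ω' => Y ω' * X ω' | MeasurableSpace.comap S m𝒮]) ω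
        = θ (S ω) * ∫ ω', X ω' ^ 2 ∂μ) :
    ∀ β₀ β₁ : ℝ,
      (∫ ω, X ω * (Y ω - X ω * β₀ - ftil (S ω) * X ω * β₁) ∂μ = 0) →
      (∫ ω, ftil (S ω) * X ω * (Y ω - X ω * β₀ - ftil (S ω) * X ω * β₁) ∂μ = 0) →
      β₁ = ((∫ ω, ftil (S ω) * θ (S ω) ∂μ)
              - (∫ ω, ftil (S ω) ∂μ) * ∫ ω, θ (S ω) ∂μ)
            / ((∫ ω, (ftil (S ω)) ^ 2 ∂μ) - (∫ ω, ftil (S ω) ∂μ) ^ 2) := by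
  intro β₀ β₁ heq1 heq2
  set a : ℝ := ∫ ω, X ω ^ 2 ∂μ with ha
  have hm : MeasurableSpace.comap S m𝒮 ≤ ‹MeasurableSpace Ω› := measurable_iff_comap_le.mp hSm
  haveI : SigmaFinite (μ.trim hm) := by infer_instance
  -- measurability
  have hfSm : Measurable (fun ω => ftil (S ω)) := hfm.comp hSm
  have hfXm : Measurable (fun ω => ftil (S ω) * X ω) := hfSm.mul hXm
  -- L2 memberships
  have hXL2 : MemLp X 2 μ := (memLp_two_iff_integrable_sq hXm.aestronglyMeasurable).2 hX2
  have hYL2 : MemLp Y 2 μ := (memLp_two_iff_integrable_sq hYm.aestronglyMeasurable).2 hY2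
  have hfL2 : MemLp (fun ω => ftil (S ω)) 2 μ :=
    (memLp_two_iff_integrable_sq hfSm.aestronglyMeasurable).2 hf2
  have hfXL2 : MemLp (fun ω => ftil (S ω) * X ω) 2 μ :=
    (memLp_two_iff_integrable_sq hfXm.aestronglyMeasurable).2 hfX2
  -- θ∘S is a.e. strongly measurable
  have ha0 : a ≠ 0 := ne_of_gt hvar
  have hθsm : AEStronglyMeasurable (fun ω => θ (S ω)) μ := by
    have hc : AEStronglyMeasurable
        (fun ω => (μ[fun ω' => Y ω' * X ω'|MeasurableSpace.comap S m𝒮]) ω * a⁻¹) μ :=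
      (stronglyMeasurable_condExp.mono hm).aestronglyMeasurable.mul aestronglyMeasurable_const
    refine hc.congr ?_
    filter_upwards [hθ] with ω hω
    rw [hω]; field_simp
  have hθL2 : MemLp (fun ω => θ (S ω)) 2 μ := (memLp_two_iff_integrable_sq hθsm).2 hθ2
  -- integrabilities
  have hYX : Integrable (fun ω => Y ω * X ω) μ := l2_mul_integrable hYL2 hXL2
  have hfYX : Integrable (fun ω => ftil (S ω) * (Y ω * X ω)) μ := by
    have := l2_mul_integrable hfXL2 hYL2
    exact this.congr (by filter_upwards with ω; ring_nf)
  have hfX2' : Integrable (fun ω => ftil (S ω) * X ω ^ 2) μ := by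
    have := l2_mul_integrable hfXL2 hXL2
    exact this.congr (by filter_upwards with ω; ring_nf)
  have hf2X2 : Integrable (fun ω => ftil (S ω) ^ 2 * X ω ^ 2) μ := by
    exact hfX2.congr (by filter_upwards with ω; ring_nf)
  have hfθ : Integrable (fun ω => ftil (S ω) * θ (S ω)) μ := l2_mul_integrable hfL2 hθL2
  have hfInt : Integrable (fun ω => ftil (S ω)) μ := hfL2.integrable one_le_two
  have hθInt : Integrable (fun ω => θ (S ω)) μ := hθL2.integrable one_le_two
  -- independence consequences
  have hind2 : IndepFun (fun ω => ftil (S ω)) (fun ω => X ω ^ 2) μ :=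
    (hindep.comp (measurable_id.pow_const 2) hfm).symm
  have hind3 : IndepFun (fun ω => ftil (S ω) ^ 2) (fun ω => X ω ^ 2) μ :=
    (hindep.comp (measurable_id.pow_const 2) (hfm.pow_const 2)).symm
  have hEfX2 : ∫ ω, ftil (S ω) * X ω ^ 2 ∂μ = (∫ ω, ftil (S ω) ∂μ) * a := by
    have := hind2.integral_mul_eq_mul_integral hfSm.aestronglyMeasurable
      ((hXm.pow_const 2).aestronglyMeasurable)
    simpa [Pi.mul_apply] using this
  have hEf2X2 : ∫ ω, ftil (S ω) ^ 2 * X ω ^ 2 ∂μ = (∫ ω, ftil (S ω) ^ 2 ∂μ) * a := by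
    have := hind3.integral_mul_eq_mul_integral (hfSm.pow_const 2).aestronglyMeasurable
      ((hXm.pow_const 2).aestronglyMeasurable)
    simpa [Pi.mul_apply] using this
  -- conditional expectation consequences
  have hEYX : ∫ ω, Y ω * X ω ∂μ = (∫ ω, θ (S ω) ∂μ) * a := by
    rw [← integral_condExp hm (f := fun ω => Y ω * X ω),
        integral_congr_ae hθ, integral_mul_const]
  have hEfYX : ∫ ω, ftil (S ω) * (Y ω * X ω) ∂μ
      = (∫ ω, ftil (S ω) * θ (S ω) ∂μ) * a := by
    have hfm' : StronglyMeasurable[MeasurableSpace.comap S m𝒮] (fun ω => ftil (S ω)) := by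
      refine Measurable.stronglyMeasurable ?_
      exact hfm.comp (Measurable.of_comap_le le_rfl)
    have hmul := condExp_mul_of_stronglyMeasurable_left (m := MeasurableSpace.comap S m𝒮) (μ := μ) hfm'
      (g := fun ω => Y ω * X ω) hfYX hYX
    calc ∫ ω, ftil (S ω) * (Y ω * X ω) ∂μ
        = ∫ ω, (μ[(fun ω => ftil (S ω)) * (fun ω => Y ω * X ω)|MeasurableSpace.comap S m𝒮]) ω ∂μ := by
          rw [integral_condExp hm]; rfl
      _ = ∫ ω, ftil (S ω) * (μ[fun ω' => Y ω' * X ω'|MeasurableSpace.comap S m𝒮]) ω ∂μ :=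
          integral_congr_ae (by filter_upwards [hmul] with ω hω; exact hω)
      _ = ∫ ω, ftil (S ω) * θ (S ω) * a ∂μ := by
          refine integral_congr_ae ?_
          filter_upwards [hθ] with ω hω
          rw [hω]; ring
      _ = (∫ ω, ftil (S ω) * θ (S ω) ∂μ) * a := integral_mul_const _ _
  -- expand the normal equations
  have hI1 : Integrable (fun ω => Y ω * X ω - β₀ * X ω ^ 2) μ := hYX.sub (hX2.const_mul β₀)
  have hI2 : Integrable (fun ω => ftil (S ω) * (Y ω * X ω) - β₀ * (ftil (S ω) * X ω ^ 2)) μ :=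
    hfYX.sub (hfX2'.const_mul β₀)
  have e1 : (∫ ω, Y ω * X ω ∂μ) - β₀ * a - β₁ * ∫ ω, ftil (S ω) * X ω ^ 2 ∂μ = 0 := by
    have C : ∫ ω, X ω * (Y ω - X ω * β₀ - ftil (S ω) * X ω * β₁) ∂μ
        = ∫ ω, (Y ω * X ω - β₀ * X ω ^ 2) - β₁ * (ftil (S ω) * X ω ^ 2) ∂μ :=
      integral_congr_ae (Filter.Eventually.of_forall fun ω => by ring)
    rw [C, integral_sub hI1 (hfX2'.const_mul β₁), integral_sub hYX (hX2.const_mul β₀),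
        integral_const_mul, integral_const_mul] at heq1
    linarith
  have e2 : (∫ ω, ftil (S ω) * (Y ω * X ω) ∂μ)
      - β₀ * (∫ ω, ftil (S ω) * X ω ^ 2 ∂μ)
      - β₁ * ∫ ω, ftil (S ω) ^ 2 * X ω ^ 2 ∂μ = 0 := by
    have C : ∫ ω, ftil (S ω) * X ω * (Y ω - X ω * β₀ - ftil (S ω) * X ω * β₁) ∂μ
        = ∫ ω, (ftil (S ω) * (Y ω * X ω) - β₀ * (ftil (S ω) * X ω ^ 2))
            - β₁ * (ftil (S ω) ^ 2 * X ω ^ 2) ∂μ :=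
      integral_congr_ae (Filter.Eventually.of_forall fun ω => by ring)
    rw [C, integral_sub hI2 (hf2X2.const_mul β₁), integral_sub hfYX (hfX2'.const_mul β₀),
        integral_const_mul, integral_const_mul] at heq2
    linarith
  rw [hEYX, hEfX2] at e1
  rw [hEfYX, hEfX2, hEf2X2] at e2
  set F := ∫ ω, ftil (S ω) ∂μ
  set F2 := ∫ ω, (ftil (S ω)) ^ 2 ∂μ
  set T := ∫ ω, θ (S ω) ∂μ
  set FT := ∫ ω, ftil (S ω) * θ (S ω) ∂μ
  have h1 : T = β₀ + β₁ * F := by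
    have := mul_right_cancel₀ ha0 (show (T - (β₀ + β₁ * F)) * a = 0 * a by ring_nf; linarith [e1])
    linarith
  have h2 : FT = β₀ * F + β₁ * F2 := by
    have := mul_right_cancel₀ ha0
      (show (FT - (β₀ * F + β₁ * F2)) * a = 0 * a by ring_nf; linarith [e2])
    linarith
  have hden : F2 - F ^ 2 ≠ 0 := ne_of_gt hvarf
  have key : FT - F * T = β₁ * (F2 - F ^ 2) := by rw [h1, h2]; ring
  rw [eq_div_iff hden]
  linarith
end

section
/- (Polynomial interaction as best L² approximation.) Under independence of the mean-zero shock X (with 0 < E[X²] < ∞) and the scalar state S, and square-integrability of all regressors, the population coefficient vector (β₀,…,β_{P−1}) of the regression of Y on (X, SX, S²X, …, S^{P−1}X) is the minimizer over b ∈ ℝ^P of E[(θ(S) − Σ_{p=0}^{P−1} S^p b_p)²], where θ(s) = E[YX | S=s]/E[X²]. -/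
open MeasureTheory ProbabilityTheory Set Matrix Filter
open scoped ENNReal

section helpers
variable {Ω : Type*} [MeasurableSpace Ω] {μ : Measure Ω}

lemma myMulInt {f g : Ω → ℝ} (hf : MemLp f 2 μ) (hg : MemLp g 2 μ) :
    Integrable (fun ω => f ω * g ω) μ := by
  have h : MemLp (f • g) 1 μ := hg.smul hf
  exact (memLp_one_iff_integrable.mp h).congr (Eventually.of_forall fun ω => by simp [smul_eq_mul])

end helpers

/-- (Polynomial interaction as best L² approximation.) With a scalar
state `S` independent of the mean-zero shock `X`, the population coefficient vector
`(β₀,…,β_{P−1})` of the regression of `Y` on `(X, SX, …, S^{P−1}X)` — characterized by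
the normal equations — minimizes `b ↦ E[(θ(S) − Σ_p S^p b_p)²]` over `b ∈ ℝᴾ`, where
`θ(s) = E[YX | S = s]/E[X²]`. -/
theorem polynomial_interaction_best_approx {Ω : Type*} [MeasurableSpace Ω]
    (μ : Measure Ω) [IsProbabilityMeasure μ] {P : ℕ}
    (S X Y : Ω → ℝ) (θ : ℝ → ℝ)
    (hSm : Measurable S) (hXm : Measurable X) (hYm : Measurable Y)
    (hθm : Measurable θ)
    (hindep : IndepFun X S μ)
    (hmean : ∫ ω, X ω ∂μ = 0)
    (hX2 : Integrable (fun ω => X ω ^ 2) μ)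
    (hvar : 0 < ∫ ω, X ω ^ 2 ∂μ)
    (hY2 : Integrable (fun ω => Y ω ^ 2) μ)
    (hreg2 : ∀ p : Fin P, Integrable (fun ω => (S ω ^ (p : ℕ) * X ω) ^ 2) μ)
    (hS2 : ∀ p : Fin P, Integrable (fun ω => (S ω ^ (p : ℕ)) ^ 2) μ)
    (hθ2 : Integrable (fun ω => (θ (S ω)) ^ 2) μ)
    (hinv : IsUnit (Matrix.of fun i j : Fin P =>
      ∫ ω, S ω ^ (i : ℕ) * S ω ^ (j : ℕ) ∂μ : Matrix (Fin P) (Fin P) ℝ).det)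
    -- `θ(s) = E[YX | S = s]/E[X²]`, via conditional expectation given `σ(S)`:
    (hθ : ∀ᵐ ω ∂μ,
      (μ[fun ω' => Y ω' * X ω' | MeasurableSpace.comap S inferInstance]) ω
        = θ (S ω) * ∫ ω', X ω' ^ 2 ∂μ) :
    ∀ β : Fin P → ℝ,
      (∀ p : Fin P,
        ∫ ω, S ω ^ (p : ℕ) * X ω *
          (Y ω - ∑ q : Fin P, S ω ^ (q : ℕ) * X ω * β q) ∂μ = 0) →
      ∀ b : Fin P → ℝ,
        ∫ ω, (θ (S ω) - ∑ p : Fin P, S ω ^ (p : ℕ) * β p) ^ 2 ∂μ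
          ≤ ∫ ω, (θ (S ω) - ∑ p : Fin P, S ω ^ (p : ℕ) * b p) ^ 2 ∂μ := by
  intro β hβ b
  have hm : MeasurableSpace.comap S inferInstance ≤ _ := hSm.comap_le
  -- L² memberships
  have hXL2 : MemLp X 2 μ := (memLp_two_iff_integrable_sq hXm.aestronglyMeasurable).2 hX2
  have hYL2 : MemLp Y 2 μ := (memLp_two_iff_integrable_sq hYm.aestronglyMeasurable).2 hY2
  have hSL2 : ∀ p : Fin P, MemLp (fun ω => S ω ^ (p : ℕ)) 2 μ := fun p =>
    (memLp_two_iff_integrable_sq ((hSm.pow_const _).aestronglyMeasurable)).2 (hS2 p)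
  have hSXL2 : ∀ p : Fin P, MemLp (fun ω => S ω ^ (p : ℕ) * X ω) 2 μ := fun p =>
    (memLp_two_iff_integrable_sq (((hSm.pow_const _).mul hXm).aestronglyMeasurable)).2 (hreg2 p)
  have hθL2 : MemLp (fun ω => θ (S ω)) 2 μ :=
    (memLp_two_iff_integrable_sq ((hθm.comp hSm).aestronglyMeasurable)).2 hθ2
  have hYXint : Integrable (fun ω => Y ω * X ω) μ := myMulInt hYL2 hXL2
  set C := ∫ ω, X ω ^ 2 ∂μ with hC_def
  -- Step 1 : E[S^p X Y] = C * E[S^p θ(S)]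
  have h1 : ∀ p : Fin P, ∫ ω, S ω ^ (p : ℕ) * X ω * Y ω ∂μ
      = C * ∫ ω, S ω ^ (p : ℕ) * θ (S ω) ∂μ := by
    intro p
    have hSmm : Measurable[MeasurableSpace.comap S inferInstance] S :=
      Measurable.of_comap_le le_rfl
    have hfm : StronglyMeasurable[MeasurableSpace.comap S inferInstance]
        (fun ω => S ω ^ (p : ℕ)) := (hSmm.pow_const _).stronglyMeasurable
    have hfg : Integrable ((fun ω => S ω ^ (p : ℕ)) * fun ω => Y ω * X ω) μ := by
      refine (myMulInt (hSXL2 p) hYL2).congr (Eventually.of_forall fun ω => ?_)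
      simp only [Pi.mul_apply]; ring
    have hmul := condExp_mul_of_stronglyMeasurable_left (μ := μ) hfm hfg hYXint
    calc ∫ ω, S ω ^ (p : ℕ) * X ω * Y ω ∂μ
        = ∫ ω, ((fun ω => S ω ^ (p : ℕ)) * fun ω => Y ω * X ω) ω ∂μ := by
          refine integral_congr_ae (Eventually.of_forall fun ω => ?_)
          simp only [Pi.mul_apply]; ring
      _ = ∫ ω, (μ[(fun ω => S ω ^ (p : ℕ)) * fun ω => Y ω * X ω |
            MeasurableSpace.comap S inferInstance]) ω ∂μ := (integral_condExp hm).symm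
      _ = ∫ ω, S ω ^ (p : ℕ) * (θ (S ω) * C) ∂μ := by
          refine integral_congr_ae ?_
          filter_upwards [hmul, hθ] with ω h₁ h₂
          simp only [Pi.mul_apply] at h₁
          rw [h₁, h₂]
      _ = C * ∫ ω, S ω ^ (p : ℕ) * θ (S ω) ∂μ := by
          rw [← integral_const_mul]
          congr 1; funext ω; ring
  -- Step 2 : E[S^p S^q X²] = E[S^p S^q] * C
  have h2 : ∀ p q : Fin P, ∫ ω, S ω ^ (p : ℕ) * S ω ^ (q : ℕ) * X ω ^ 2 ∂μ
      = (∫ ω, S ω ^ (p : ℕ) * S ω ^ (q : ℕ) ∂μ) * C := by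
    intro p q
    have hind2 : IndepFun (fun ω => X ω ^ 2) (fun ω => S ω ^ ((p : ℕ) + (q : ℕ))) μ :=
      hindep.comp (measurable_id.pow_const 2 : Measurable fun x : ℝ => x ^ 2)
        (measurable_id.pow_const _ : Measurable fun x : ℝ => x ^ ((p : ℕ) + (q : ℕ)))
    have hSpq : Integrable (fun ω => S ω ^ ((p : ℕ) + (q : ℕ))) μ := by
      refine (myMulInt (hSL2 p) (hSL2 q)).congr (Eventually.of_forall fun ω => ?_)
      exact (pow_add _ _ _).symm
    have hh := hind2.integral_fun_mul_eq_mul_integral hX2.1 hSpq.1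
    calc ∫ ω, S ω ^ (p : ℕ) * S ω ^ (q : ℕ) * X ω ^ 2 ∂μ
        = ∫ ω, X ω ^ 2 * S ω ^ ((p : ℕ) + (q : ℕ)) ∂μ := by
          congr 1; funext ω; rw [pow_add]; ring
      _ = C * ∫ ω, S ω ^ ((p : ℕ) + (q : ℕ)) ∂μ := hh
      _ = (∫ ω, S ω ^ (p : ℕ) * S ω ^ (q : ℕ) ∂μ) * C := by
          rw [mul_comm]; congr 1; congr 1; funext ω; rw [pow_add]
  -- L² membership of residual and of polynomial combinations
  have hpoly : ∀ c : Fin P → ℝ, MemLp (fun ω => ∑ q : Fin P, S ω ^ (q : ℕ) * c q) 2 μ := by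
    intro c
    have h := memLp_finset_sum' (μ := μ) (p := (2 : ℝ≥0∞)) Finset.univ
      (f := fun q : Fin P => fun ω => S ω ^ (q : ℕ) * c q)
      (fun q _ => ((hSL2 q).const_mul (c q)).ae_eq
        (Eventually.of_forall fun ω => by ring))
    exact h.ae_eq (Eventually.of_forall fun ω => by simp [Finset.sum_apply])
  have hres2 : MemLp (fun ω => θ (S ω) - ∑ q : Fin P, S ω ^ (q : ℕ) * β q) 2 μ := by
    have := hθL2.sub (hpoly β)
    exact this.ae_eq (Eventually.of_forall fun ω => by simp [Pi.sub_apply])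
  -- orthogonality: normal equations imply E[S^p (θ(S) - Σ S^q β_q)] = 0
  have key : ∀ p : Fin P,
      ∫ ω, S ω ^ (p : ℕ) * (θ (S ω) - ∑ q : Fin P, S ω ^ (q : ℕ) * β q) ∂μ = 0 := by
    intro p
    -- integrands
    have hint1 : Integrable (fun ω => S ω ^ (p : ℕ) * X ω * Y ω) μ := by
      refine (myMulInt (hSXL2 p) hYL2).congr (Eventually.of_forall fun ω => by ring_nf)
    have hint2 : ∀ q : Fin P,
        Integrable (fun ω => β q * (S ω ^ (p : ℕ) * S ω ^ (q : ℕ) * X ω ^ 2)) μ := by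
      intro q
      refine ((myMulInt (hSXL2 p) (hSXL2 q)).const_mul (β q)).congr
        (Eventually.of_forall fun ω => by ring_nf)
    -- expand the normal equation
    have expand : ∫ ω, S ω ^ (p : ℕ) * X ω *
        (Y ω - ∑ q : Fin P, S ω ^ (q : ℕ) * X ω * β q) ∂μ
        = ∫ ω, S ω ^ (p : ℕ) * X ω * Y ω ∂μ
          - ∑ q : Fin P, β q * ∫ ω, S ω ^ (p : ℕ) * S ω ^ (q : ℕ) * X ω ^ 2 ∂μ := by
      have hsumint : Integrable
          (fun ω => ∑ q : Fin P, β q * (S ω ^ (p : ℕ) * S ω ^ (q : ℕ) * X ω ^ 2)) μ :=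
        integrable_finset_sum _ (fun q _ => hint2 q)
      calc ∫ ω, S ω ^ (p : ℕ) * X ω * (Y ω - ∑ q : Fin P, S ω ^ (q : ℕ) * X ω * β q) ∂μ
          = ∫ ω, (S ω ^ (p : ℕ) * X ω * Y ω
              - ∑ q : Fin P, β q * (S ω ^ (p : ℕ) * S ω ^ (q : ℕ) * X ω ^ 2)) ∂μ := by
            congr 1; funext ω
            rw [mul_sub]; congr 1
            rw [Finset.mul_sum]
            exact Finset.sum_congr rfl fun q _ => by ring
        _ = ∫ ω, S ω ^ (p : ℕ) * X ω * Y ω ∂μ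
              - ∑ q : Fin P, β q * ∫ ω, S ω ^ (p : ℕ) * S ω ^ (q : ℕ) * X ω ^ 2 ∂μ := by
            rw [integral_sub hint1 hsumint, integral_finset_sum _ (fun q _ => hint2 q)]
            simp_rw [integral_const_mul]
    -- combine with h1, h2
    have heq : C * ((∫ ω, S ω ^ (p : ℕ) * θ (S ω) ∂μ)
        - ∑ q : Fin P, β q * ∫ ω, S ω ^ (p : ℕ) * S ω ^ (q : ℕ) ∂μ) = 0 := by
      have := hβ p
      rw [expand, h1 p] at this
      rw [mul_sub, Finset.mul_sum]
      rw [← this]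
      congr 1
      exact Finset.sum_congr rfl fun q _ => by rw [h2 p q]; ring
    have hzero : (∫ ω, S ω ^ (p : ℕ) * θ (S ω) ∂μ)
        - ∑ q : Fin P, β q * ∫ ω, S ω ^ (p : ℕ) * S ω ^ (q : ℕ) ∂μ = 0 :=
      (mul_eq_zero.mp heq).resolve_left (ne_of_gt hvar)
    -- rewrite the goal integral as this difference
    have hintθ : Integrable (fun ω => S ω ^ (p : ℕ) * θ (S ω)) μ :=
      myMulInt (hSL2 p) hθL2
    have hintq : ∀ q : Fin P,
        Integrable (fun ω => β q * (S ω ^ (p : ℕ) * S ω ^ (q : ℕ))) μ := fun q =>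
      ((myMulInt (hSL2 p) (hSL2 q)).const_mul (β q)).congr
        (Eventually.of_forall fun ω => by ring_nf)
    calc ∫ ω, S ω ^ (p : ℕ) * (θ (S ω) - ∑ q : Fin P, S ω ^ (q : ℕ) * β q) ∂μ
        = ∫ ω, (S ω ^ (p : ℕ) * θ (S ω)
            - ∑ q : Fin P, β q * (S ω ^ (p : ℕ) * S ω ^ (q : ℕ))) ∂μ := by
          congr 1; funext ω
          rw [mul_sub]; congr 1
          rw [Finset.mul_sum]
          exact Finset.sum_congr rfl fun q _ => by ring
      _ = (∫ ω, S ω ^ (p : ℕ) * θ (S ω) ∂μ)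
            - ∑ q : Fin P, β q * ∫ ω, S ω ^ (p : ℕ) * S ω ^ (q : ℕ) ∂μ := by
          rw [integral_sub hintθ (integrable_finset_sum _ (fun q _ => hintq q)),
            integral_finset_sum _ (fun q _ => hintq q)]
          simp_rw [integral_const_mul]
      _ = 0 := hzero
  -- final step : Pythagoras
  have hhL2 : MemLp (fun ω => ∑ q : Fin P, S ω ^ (q : ℕ) * (β q - b q)) 2 μ := hpoly _
  have I1 : Integrable (fun ω => (θ (S ω) - ∑ p : Fin P, S ω ^ (p : ℕ) * β p)
      * (θ (S ω) - ∑ p : Fin P, S ω ^ (p : ℕ) * β p)) μ := myMulInt hres2 hres2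
  have I2 : Integrable (fun ω => (θ (S ω) - ∑ p : Fin P, S ω ^ (p : ℕ) * β p)
      * ∑ q : Fin P, S ω ^ (q : ℕ) * (β q - b q)) μ := myMulInt hres2 hhL2
  have I3 : Integrable (fun ω => (∑ q : Fin P, S ω ^ (q : ℕ) * (β q - b q))
      * ∑ q : Fin P, S ω ^ (q : ℕ) * (β q - b q)) μ := myMulInt hhL2 hhL2
  have Igh : ∫ ω, (θ (S ω) - ∑ p : Fin P, S ω ^ (p : ℕ) * β p)
      * ∑ q : Fin P, S ω ^ (q : ℕ) * (β q - b q) ∂μ = 0 := by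
    have hterm : ∀ q : Fin P, Integrable (fun ω => (β q - b q)
        * (S ω ^ (q : ℕ) * (θ (S ω) - ∑ p : Fin P, S ω ^ (p : ℕ) * β p))) μ := fun q =>
      (myMulInt (hSL2 q) hres2).const_mul _
    calc ∫ ω, (θ (S ω) - ∑ p : Fin P, S ω ^ (p : ℕ) * β p)
          * ∑ q : Fin P, S ω ^ (q : ℕ) * (β q - b q) ∂μ
        = ∫ ω, ∑ q : Fin P, (β q - b q)
            * (S ω ^ (q : ℕ) * (θ (S ω) - ∑ p : Fin P, S ω ^ (p : ℕ) * β p)) ∂μ := by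
          congr 1; funext ω
          rw [Finset.mul_sum]
          exact Finset.sum_congr rfl fun q _ => by ring
      _ = ∑ q : Fin P, (β q - b q)
            * ∫ ω, S ω ^ (q : ℕ) * (θ (S ω) - ∑ p : Fin P, S ω ^ (p : ℕ) * β p) ∂μ := by
          rw [integral_finset_sum _ (fun q _ => hterm q)]
          simp_rw [integral_const_mul]
      _ = 0 := Finset.sum_eq_zero fun q _ => by rw [key q, mul_zero]
  have hpt : ∀ ω, θ (S ω) - ∑ p : Fin P, S ω ^ (p : ℕ) * b p
      = (θ (S ω) - ∑ p : Fin P, S ω ^ (p : ℕ) * β p)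
        + ∑ q : Fin P, S ω ^ (q : ℕ) * (β q - b q) := by
    intro ω
    have h' : ∑ q : Fin P, S ω ^ (q : ℕ) * (β q - b q)
        = ∑ p : Fin P, S ω ^ (p : ℕ) * β p - ∑ p : Fin P, S ω ^ (p : ℕ) * b p := by
      rw [← Finset.sum_sub_distrib]
      exact Finset.sum_congr rfl fun q _ => by ring
    rw [h']; ring
  have expand2 : ∫ ω, (θ (S ω) - ∑ p : Fin P, S ω ^ (p : ℕ) * b p) ^ 2 ∂μ
      = ∫ ω, (θ (S ω) - ∑ p : Fin P, S ω ^ (p : ℕ) * β p) ^ 2 ∂μ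
        + ∫ ω, (∑ q : Fin P, S ω ^ (q : ℕ) * (β q - b q))
            * ∑ q : Fin P, S ω ^ (q : ℕ) * (β q - b q) ∂μ := by
    calc ∫ ω, (θ (S ω) - ∑ p : Fin P, S ω ^ (p : ℕ) * b p) ^ 2 ∂μ
        = ∫ ω, ((θ (S ω) - ∑ p : Fin P, S ω ^ (p : ℕ) * β p)
              * (θ (S ω) - ∑ p : Fin P, S ω ^ (p : ℕ) * β p)
            + (2 * ((θ (S ω) - ∑ p : Fin P, S ω ^ (p : ℕ) * β p)
                * ∑ q : Fin P, S ω ^ (q : ℕ) * (β q - b q))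
              + (∑ q : Fin P, S ω ^ (q : ℕ) * (β q - b q))
                * ∑ q : Fin P, S ω ^ (q : ℕ) * (β q - b q))) ∂μ := by
          congr 1; funext ω
          rw [hpt ω]; ring
      _ = _ := by
          have I2' : Integrable (fun ω => 2 * ((θ (S ω) - ∑ p : Fin P, S ω ^ (p : ℕ) * β p)
              * ∑ q : Fin P, S ω ^ (q : ℕ) * (β q - b q))) μ := I2.const_mul 2
          have I23 : Integrable (fun ω =>
              2 * ((θ (S ω) - ∑ p : Fin P, S ω ^ (p : ℕ) * β p)
                * ∑ q : Fin P, S ω ^ (q : ℕ) * (β q - b q))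
              + (∑ q : Fin P, S ω ^ (q : ℕ) * (β q - b q))
                * ∑ q : Fin P, S ω ^ (q : ℕ) * (β q - b q)) μ := I2'.add I3
          rw [integral_add I1 I23, integral_add I2' I3, integral_const_mul, Igh]
          have : ∫ ω, (θ (S ω) - ∑ p : Fin P, S ω ^ (p : ℕ) * β p)
              * (θ (S ω) - ∑ p : Fin P, S ω ^ (p : ℕ) * β p) ∂μ
              = ∫ ω, (θ (S ω) - ∑ p : Fin P, S ω ^ (p : ℕ) * β p) ^ 2 ∂μ := by
            congr 1; funext ω; rw [pow_two]
          rw [this]; ring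
  rw [expand2]
  have hnn : 0 ≤ ∫ ω, (∑ q : Fin P, S ω ^ (q : ℕ) * (β q - b q))
      * ∑ q : Fin P, S ω ^ (q : ℕ) * (β q - b q) ∂μ :=
    integral_nonneg fun ω => mul_self_nonneg _
  linarith
end

section
/- (LATE as special case.) Let Z, X ∈ {0,1} with Z randomly assigned (independent of potential outcomes and compliance type), potential outcomes Y(0), Y(1), potential treatments X(0), X(1) satisfying monotonicity X(1) ≥ X(0), and P(X(1) > X(0)) > 0. Then Cov(Y, Z)/Cov(X, Z) = E[Y(1) − Y(0) | X(1) > X(0)], the local average treatment effect for compliers. -/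
open MeasureTheory ProbabilityTheory Set

/-- (LATE as special case.) With a randomly assigned binary instrument
`Z`, binary potential treatments `X(0) ≤ X(1)` (monotonicity, some compliers), and
potential outcomes `Y(0), Y(1)`, the population IV (Wald) estimand
`Cov(Y,Z)/Cov(X,Z)` equals the local average treatment effect
`E[Y(1) − Y(0) | X(1) > X(0)]` for compliers, where `X = X(Z)` and `Y = Y(X)`. -/
theorem late_special_case {Ω : Type*} [MeasurableSpace Ω]
    (μ : Measure Ω) [IsProbabilityMeasure μ]
    (Z X0 X1 Y0 Y1 : Ω → ℝ)
    (hZm : Measurable Z) (hX0m : Measurable X0) (hX1m : Measurable X1)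
    (hY0m : Measurable Y0) (hY1m : Measurable Y1)
    (hZbin : ∀ ω, Z ω = 0 ∨ Z ω = 1)
    (hXbin : ∀ ω, (X0 ω = 0 ∨ X0 ω = 1) ∧ (X1 ω = 0 ∨ X1 ω = 1))
    (hY0int : Integrable Y0 μ) (hY1int : Integrable Y1 μ)
    -- random assignment: `Z ⊥⊥ (Y(0), Y(1), X(0), X(1))`, with `0 < P(Z=1) < 1`
    (hindep : IndepFun Z (fun ω => (Y0 ω, Y1 ω, X0 ω, X1 ω)) μ)
    (hZ1 : 0 < μ {ω | Z ω = 1}) (hZ0 : 0 < μ {ω | Z ω = 0})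
    -- monotonicity and existence of compliers
    (hmono : ∀ ω, X0 ω ≤ X1 ω)
    (hcompl : 0 < μ {ω | X0 ω < X1 ω}) :
    ((∫ ω, (if (if Z ω = 1 then X1 ω else X0 ω) = 1 then Y1 ω else Y0 ω) * Z ω ∂μ)
        - (∫ ω, (if (if Z ω = 1 then X1 ω else X0 ω) = 1 then Y1 ω else Y0 ω) ∂μ)
            * ∫ ω, Z ω ∂μ)
      / ((∫ ω, (if Z ω = 1 then X1 ω else X0 ω) * Z ω ∂μ)
          - (∫ ω, (if Z ω = 1 then X1 ω else X0 ω) ∂μ) * ∫ ω, Z ω ∂μ)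
      = (∫ ω in {ω | X0 ω < X1 ω}, (Y1 ω - Y0 ω) ∂μ)
          / (μ {ω | X0 ω < X1 ω}).toReal := by
  classical
  set W : Ω → ℝ × ℝ × ℝ × ℝ := fun ω => (Y0 ω, Y1 ω, X0 ω, X1 ω) with hW
  set A1 : Ω → ℝ := fun ω => if X1 ω = 1 then Y1 ω else Y0 ω with hA1
  set A0 : Ω → ℝ := fun ω => if X0 ω = 1 then Y1 ω else Y0 ω with hA0
  set C : Set Ω := {ω | X0 ω < X1 ω} with hC
  have hWm : Measurable W := by fun_prop
  -- measurability of A1, A0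
  have hA1m : Measurable A1 :=
    Measurable.ite (hX1m (measurableSet_singleton 1)) hY1m hY0m
  have hA0m : Measurable A0 :=
    Measurable.ite (hX0m (measurableSet_singleton 1)) hY1m hY0m
  -- integrability
  have habs : Integrable (fun ω => |Y0 ω| + |Y1 ω|) μ := hY0int.abs.add hY1int.abs
  have hbound : ∀ (B : Ω → ℝ), (∀ ω, B ω = Y1 ω ∨ B ω = Y0 ω) → Measurable B →
      Integrable B μ := by
    intro B hB hBm
    refine habs.mono hBm.aestronglyMeasurable (Filter.Eventually.of_forall fun ω => ?_)
    have h1 : |(|Y0 ω| + |Y1 ω|)| = |Y0 ω| + |Y1 ω| := abs_of_nonneg (by positivity)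
    rcases hB ω with h | h <;>
      simp only [Real.norm_eq_abs, h, h1] <;>
      [exact le_add_of_nonneg_left (abs_nonneg _);
       exact le_add_of_nonneg_right (abs_nonneg _)]
  have hA1i : Integrable A1 μ :=
    hbound A1 (fun ω => by by_cases h : X1 ω = 1 <;> simp [hA1, h]) hA1m
  have hA0i : Integrable A0 μ :=
    hbound A0 (fun ω => by by_cases h : X0 ω = 1 <;> simp [hA0, h]) hA0m
  have hbin_int : ∀ (f : Ω → ℝ), (∀ ω, f ω = 0 ∨ f ω = 1) → Measurable f →
      Integrable f μ := by
    intro f hf hfm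
    refine (integrable_const (1 : ℝ)).mono hfm.aestronglyMeasurable
      (Filter.Eventually.of_forall fun ω => ?_)
    rcases hf ω with h | h <;> simp [h]
  have hZint : Integrable Z μ := hbin_int Z hZbin hZm
  have hX0int : Integrable X0 μ := hbin_int X0 (fun ω => (hXbin ω).1) hX0m
  have hX1int : Integrable X1 μ := hbin_int X1 (fun ω => (hXbin ω).2) hX1m
  -- independence facts
  have hZA1 : IndepFun Z A1 μ := by
    have hφ : Measurable (fun p : ℝ × ℝ × ℝ × ℝ => if p.2.2.2 = 1 then p.2.1 else p.1) :=
      Measurable.ite ((measurable_snd.comp (measurable_snd.comp measurable_snd))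
        (measurableSet_singleton 1)) (measurable_fst.comp measurable_snd) measurable_fst
    exact hindep.comp measurable_id hφ
  have hZD : IndepFun Z (fun ω => A1 ω - A0 ω) μ := by
    have hφ : Measurable (fun p : ℝ × ℝ × ℝ × ℝ =>
        (if p.2.2.2 = 1 then p.2.1 else p.1) - (if p.2.2.1 = 1 then p.2.1 else p.1)) := by
      apply Measurable.sub
      · exact Measurable.ite ((measurable_snd.comp (measurable_snd.comp measurable_snd))
          (measurableSet_singleton 1)) (measurable_fst.comp measurable_snd) measurable_fst
      · exact Measurable.ite ((measurable_fst.comp (measurable_snd.comp measurable_snd))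
          (measurableSet_singleton 1)) (measurable_fst.comp measurable_snd) measurable_fst
    exact hindep.comp measurable_id hφ
  have hZX1 : IndepFun Z X1 μ :=
    hindep.comp measurable_id (measurable_snd.comp (measurable_snd.comp measurable_snd))
  have hZXD : IndepFun Z (fun ω => X1 ω - X0 ω) μ :=
    hindep.comp measurable_id (((measurable_snd.comp (measurable_snd.comp measurable_snd))).sub
      (measurable_fst.comp (measurable_snd.comp measurable_snd)))
  -- basic quantities
  set p : ℝ := ∫ ω, Z ω ∂μ with hpdef
  have hCm : MeasurableSet C := measurableSet_lt hX0m hX1m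
  have hmne : (μ C) ≠ ⊤ := measure_ne_top μ C
  have hm_pos : 0 < (μ C).toReal := ENNReal.toReal_pos hcompl.ne' hmne
  -- p = μ{Z=1}
  have hZset : MeasurableSet {ω | Z ω = 1} := hZm (measurableSet_singleton 1)
  have hp_eq : p = (μ {ω | Z ω = 1}).toReal := by
    have h1 : ∫ ω, Z ω ∂μ = ∫ ω, Set.indicator {ω | Z ω = 1} (fun _ => (1 : ℝ)) ω ∂μ :=
      integral_congr_ae (Filter.Eventually.of_forall fun ω => by
        rcases hZbin ω with h | h <;> simp [Set.indicator_apply, h])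
    rw [hpdef, h1, integral_indicator_const (1 : ℝ) hZset, smul_eq_mul, mul_one, measureReal_def]
  have hp_pos : 0 < p := by
    rw [hp_eq]; exact ENNReal.toReal_pos hZ1.ne' (measure_ne_top _ _)
  have h1p_pos : 0 < 1 - p := by
    have h2 : ∫ ω, (1 - Z ω) ∂μ = (μ {ω | Z ω = 0}).toReal := by
      have h1 : ∫ ω, (1 - Z ω) ∂μ
          = ∫ ω, Set.indicator {ω | Z ω = 0} (fun _ => (1 : ℝ)) ω ∂μ :=
        integral_congr_ae (Filter.Eventually.of_forall fun ω => by
          rcases hZbin ω with h | h <;> simp [Set.indicator_apply, h])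
      rw [h1, integral_indicator_const (1 : ℝ) (show MeasurableSet {ω | Z ω = 0} from hZm (measurableSet_singleton 0)),
        smul_eq_mul, mul_one, measureReal_def]
    have h3 : ∫ ω, (1 - Z ω) ∂μ = 1 - p := by
      rw [integral_sub (integrable_const 1) hZint, integral_const]
      simp [hpdef]
    rw [← h3, h2]
    exact ENNReal.toReal_pos hZ0.ne' (measure_ne_top _ _)
  have hc : p * (1 - p) ≠ 0 := (mul_pos hp_pos h1p_pos).ne'
  -- complier identities
  have hXC : (fun ω => X1 ω - X0 ω) = Set.indicator C (fun _ => (1 : ℝ)) := by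
    funext ω
    rcases (hXbin ω).1 with h0 | h0 <;> rcases (hXbin ω).2 with h1 | h1 <;>
      simp [Set.indicator_apply, hC, h0, h1] <;> norm_num
    · exact absurd (hmono ω) (by rw [h0, h1]; norm_num)
  have hXint_eq : ∫ ω, (X1 ω - X0 ω) ∂μ = (μ C).toReal := by
    rw [hXC, integral_indicator_const (1 : ℝ) hCm, smul_eq_mul, mul_one, measureReal_def]
  have hAC : (fun ω => A1 ω - A0 ω) = Set.indicator C (fun ω => Y1 ω - Y0 ω) := by
    funext ω
    rcases (hXbin ω).1 with h0 | h0 <;> rcases (hXbin ω).2 with h1 | h1 <;>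
      simp [Set.indicator_apply, hC, hA1, hA0, h0, h1] <;> norm_num
    · exact absurd (hmono ω) (by rw [h0, h1]; norm_num)
  have hAint_eq : ∫ ω, (A1 ω - A0 ω) ∂μ = ∫ ω in C, (Y1 ω - Y0 ω) ∂μ := by
    rw [hAC, integral_indicator hCm]
  -- rewrite the four integrals in the goal
  have hI1 : (∫ ω, (if (if Z ω = 1 then X1 ω else X0 ω) = 1 then Y1 ω else Y0 ω) * Z ω ∂μ)
      = p * ∫ ω, A1 ω ∂μ := by
    have he : ∀ ω, (if (if Z ω = 1 then X1 ω else X0 ω) = 1 then Y1 ω else Y0 ω) * Z ω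
        = Z ω * A1 ω := by
      intro ω
      rcases hZbin ω with h | h <;> simp [hA1, h]
    rw [integral_congr_ae (Filter.Eventually.of_forall he)]
    exact hZA1.integral_fun_mul_eq_mul_integral hZm.aestronglyMeasurable hA1m.aestronglyMeasurable
  have hI2 : (∫ ω, (if (if Z ω = 1 then X1 ω else X0 ω) = 1 then Y1 ω else Y0 ω) ∂μ)
      = (∫ ω, A0 ω ∂μ) + p * ∫ ω, (A1 ω - A0 ω) ∂μ := by
    have he : ∀ ω, (if (if Z ω = 1 then X1 ω else X0 ω) = 1 then Y1 ω else Y0 ω)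
        = A0 ω + Z ω * (A1 ω - A0 ω) := by
      intro ω
      rcases hZbin ω with h | h <;> simp [hA1, hA0, h]
    rw [integral_congr_ae (Filter.Eventually.of_forall he),
      integral_add hA0i (Integrable.bdd_mul (show Integrable (fun ω => A1 ω - A0 ω) μ from hA1i.sub hA0i) hZm.aestronglyMeasurable
        (c := 1) (Filter.Eventually.of_forall fun ω => by rcases hZbin ω with h | h <;> simp [h])),
      hZD.integral_fun_mul_eq_mul_integral hZm.aestronglyMeasurable (hA1m.sub hA0m).aestronglyMeasurable]
  have hI3 : (∫ ω, (if Z ω = 1 then X1 ω else X0 ω) * Z ω ∂μ) = p * ∫ ω, X1 ω ∂μ := by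
    have he : ∀ ω, (if Z ω = 1 then X1 ω else X0 ω) * Z ω = Z ω * X1 ω := by
      intro ω
      rcases hZbin ω with h | h <;> simp [h]
    rw [integral_congr_ae (Filter.Eventually.of_forall he)]
    exact hZX1.integral_fun_mul_eq_mul_integral hZm.aestronglyMeasurable hX1m.aestronglyMeasurable
  have hI4 : (∫ ω, (if Z ω = 1 then X1 ω else X0 ω) ∂μ)
      = (∫ ω, X0 ω ∂μ) + p * ∫ ω, (X1 ω - X0 ω) ∂μ := by
    have he : ∀ ω, (if Z ω = 1 then X1 ω else X0 ω) = X0 ω + Z ω * (X1 ω - X0 ω) := by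
      intro ω
      rcases hZbin ω with h | h <;> simp [h]
    rw [integral_congr_ae (Filter.Eventually.of_forall he),
      integral_add hX0int (Integrable.bdd_mul (show Integrable (fun ω => X1 ω - X0 ω) μ from hX1int.sub hX0int) hZm.aestronglyMeasurable
        (c := 1) (Filter.Eventually.of_forall fun ω => by rcases hZbin ω with h | h <;> simp [h])),
      hZXD.integral_fun_mul_eq_mul_integral hZm.aestronglyMeasurable (hX1m.sub hX0m).aestronglyMeasurable]
  have hA1split : ∫ ω, A1 ω ∂μ = (∫ ω, A0 ω ∂μ) + ∫ ω, (A1 ω - A0 ω) ∂μ := by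
    rw [integral_sub hA1i hA0i]; ring
  have hX1split : ∫ ω, X1 ω ∂μ = (∫ ω, X0 ω ∂μ) + ∫ ω, (X1 ω - X0 ω) ∂μ := by
    rw [integral_sub hX1int hX0int]; ring
  rw [hI1, hI2, hI3, hI4, hA1split, hX1split, hXint_eq, ← hAint_eq]
  set a0 := ∫ ω, A0 ω ∂μ
  set d := ∫ ω, (A1 ω - A0 ω) ∂μ
  set x0 := ∫ ω, X0 ω ∂μ
  set m := (μ C).toReal
  have e1 : p * (a0 + d) - (a0 + p * d) * p = (p * (1 - p)) * d := by ring
  have e2 : p * (x0 + m) - (x0 + p * m) * p = (p * (1 - p)) * m := by ring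
  rw [e1, e2, mul_div_mul_left d m hc]
end

section
/- (Spurious state dependence in LP-IV, Example: government spending.) Let Z ~ N(0,1), M > 0, m > 0, δ ∈ (0,1), c ∈ (0,1). Define ψ(x) = mx for x < M and ψ(x) = mx − (x−M)δm for x ≥ M; X(z,0) = z; X(z,1) = z for z < M and z − (z−M)c for z ≥ M. Define θ_IV(0) = ∫φ(z)ψ'(X(z,0))dz and θ_IV(1) = ∫φ(z)ψ'(X(z,1))X'(z,1)dz / ∫φ(z)X'(z,1)dz, where φ is the standard normal density. Then θ_IV(0) = m(Φ(M) + (1−Φ(M))(1−δ)), θ_IV(1) = m(Φ(M) + (1−Φ(M))(1−δ)(1−c))/(Φ(M) + (1−Φ(M))(1−c)), and β₁ := θ_IV(1) − θ_IV(0) > 0 whenever δ > 0 and c > 0. -/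
open MeasureTheory Set Real

/-- Standard normal density. -/
noncomputable def stdNormalPDF (z : ℝ) : ℝ :=
  (Real.sqrt (2 * Real.pi))⁻¹ * Real.exp (-z ^ 2 / 2)

/-- Standard normal CDF. -/
noncomputable def stdNormalCDF (x : ℝ) : ℝ :=
  ∫ z in Set.Iic x, stdNormalPDF z

/-- The kinked output function `ψ` of the government-spending example:
`ψ(x) = mx` for `x < M` and `ψ(x) = mx − (x−M)δm` for `x ≥ M`. Its a.e. derivative is
`ψ'(x) = m − 1[x ≥ M]·δm`. -/
noncomputable def psiDeriv (M m δ x : ℝ) : ℝ :=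
  if x < M then m else m * (1 - δ)

/-- First stage `X(z,s)`: pass-through of military spending shocks into government
spending; `X(z,0) = z`, and `X(z,1) = z` for `z < M`, `z − (z−M)c` for `z ≥ M`. -/
noncomputable def Xstage (M c : ℝ) (s : ℕ) (z : ℝ) : ℝ :=
  if s = 0 then z else (if z < M then z else z - (z - M) * c)

/-- The a.e. derivative `X'(z,s)` of the first stage in `z`. -/
noncomputable def XstageDeriv (M c : ℝ) (s : ℕ) (z : ℝ) : ℝ :=
  if s = 0 then 1 else (if z < M then 1 else 1 - c)

lemma stdPDF_pos (z : ℝ) : 0 < stdNormalPDF z := by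
  unfold stdNormalPDF; positivity

lemma stdPDF_integrable : Integrable stdNormalPDF := by
  have h := (integrable_exp_neg_mul_sq (by norm_num : (0:ℝ) < 1/2)).const_mul
    (Real.sqrt (2 * Real.pi))⁻¹
  unfold stdNormalPDF
  convert h using 2 with z
  ring_nf

lemma stdPDF_total : ∫ z : ℝ, stdNormalPDF z = 1 := by
  have h := integral_gaussian (1/2)
  unfold stdNormalPDF
  rw [integral_const_mul]
  have : (fun z : ℝ => Real.exp (-z ^ 2 / 2)) = fun z : ℝ => Real.exp (-(1/2) * z ^ 2) := by
    funext z; ring_nf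
  rw [this, h, show Real.pi / (1/2) = 2 * Real.pi by ring]
  exact inv_mul_cancel₀ (by positivity)

lemma stdKey (M a b : ℝ) :
    ∫ z : ℝ, stdNormalPDF z * (if z < M then a else b)
      = a * stdNormalCDF M + b * (1 - stdNormalCDF M) := by
  have hmeas : AEStronglyMeasurable (fun z : ℝ => (if z < M then a else b)) volume := by
    apply AEStronglyMeasurable.piecewise (s := Iio M) measurableSet_Iio <;>
      exact aestronglyMeasurable_const
  have hint : Integrable (fun z : ℝ => stdNormalPDF z * (if z < M then a else b)) := by
    have := stdPDF_integrable.bdd_mul hmeas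
      (c := max |a| |b|) (Filter.Eventually.of_forall (by
        intro x
        by_cases h : x < M <;> simp [h, le_max_left, le_max_right]))
    convert this using 2 with z
    ring
  have h1 : ∫ z in Iio M, stdNormalPDF z * (if z < M then a else b)
      = a * stdNormalCDF M := by
    rw [setIntegral_congr_fun measurableSet_Iio
      (g := fun z => a * stdNormalPDF z) (by intro z hz; simp [hz.out]; ring)]
    rw [integral_const_mul, stdNormalCDF, integral_Iic_eq_integral_Iio]
  have h2 : ∫ z in Ici M, stdNormalPDF z * (if z < M then a else b)
      = b * (1 - stdNormalCDF M) := by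
    rw [setIntegral_congr_fun measurableSet_Ici
      (g := fun z => b * stdNormalPDF z) (by
        intro z hz
        simp [not_lt.mpr hz.out]
        ring)]
    rw [integral_const_mul]
    have hsplit : (∫ z in Iio M, stdNormalPDF z) + ∫ z in Ici M, stdNormalPDF z = 1 := by
      rw [intervalIntegral.integral_Iio_add_Ici stdPDF_integrable.integrableOn stdPDF_integrable.integrableOn,
        stdPDF_total]
    have : stdNormalCDF M = ∫ z in Iio M, stdNormalPDF z := by
      rw [stdNormalCDF, integral_Iic_eq_integral_Iio]
    rw [this]
    congr 1
    linarith
  rw [← intervalIntegral.integral_Iio_add_Ici hint.integrableOn hint.integrableOn, h1, h2]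

lemma stdCDF_mem (M : ℝ) : 0 < stdNormalCDF M ∧ stdNormalCDF M < 1 := by
  have hpos : ∀ (s : Set ℝ), MeasurableSet s → volume s ≠ 0 →
      0 < ∫ z in s, stdNormalPDF z := by
    intro s hs hvs
    rw [setIntegral_pos_iff_support_of_nonneg_ae
      (Filter.Eventually.of_forall fun z => (stdPDF_pos z).le) stdPDF_integrable.integrableOn]
    have : Function.support stdNormalPDF = Set.univ := by
      ext z; simp [Function.mem_support, (stdPDF_pos z).ne']
    rw [this, Set.univ_inter]
    exact hvs.bot_lt
  have h1 : 0 < stdNormalCDF M := by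
    apply hpos _ measurableSet_Iic
    simp [Real.volume_Iic]
  have h2 : 0 < ∫ z in Ici M, stdNormalPDF z := by
    apply hpos _ measurableSet_Ici
    simp [Real.volume_Ici]
  have hsplit : (∫ z in Iio M, stdNormalPDF z) + ∫ z in Ici M, stdNormalPDF z = 1 := by
    rw [intervalIntegral.integral_Iio_add_Ici stdPDF_integrable.integrableOn stdPDF_integrable.integrableOn,
      stdPDF_total]
  have : stdNormalCDF M = ∫ z in Iio M, stdNormalPDF z := by
    rw [stdNormalCDF, integral_Iic_eq_integral_Iio]
  exact ⟨h1, by linarith [this]⟩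

/-- (Spurious state dependence in LP-IV.) With
`θ_IV(0) = ∫ φ(z) ψ'(X(z,0)) dz` and
`θ_IV(1) = ∫ φ(z) ψ'(X(z,1)) X'(z,1) dz / ∫ φ(z) X'(z,1) dz`, one has
`θ_IV(0) = m(Φ(M) + (1−Φ(M))(1−δ))`,
`θ_IV(1) = m(Φ(M) + (1−Φ(M))(1−δ)(1−c))/(Φ(M) + (1−Φ(M))(1−c))`, and the
interaction coefficient `β₁ = θ_IV(1) − θ_IV(0)` is strictly positive whenever
`δ > 0` and `c > 0` — even though the effect of interest is not state-dependent. -/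
theorem spurious_state_dependence (M m δ c : ℝ)
    (hM : 0 < M) (hm : 0 < m) (hδ : δ ∈ Set.Ioo (0 : ℝ) 1)
    (hc : c ∈ Set.Ioo (0 : ℝ) 1) :
    (∫ z : ℝ, stdNormalPDF z * psiDeriv M m δ (Xstage M c 0 z)
        = m * (stdNormalCDF M + (1 - stdNormalCDF M) * (1 - δ)))
    ∧ ((∫ z : ℝ, stdNormalPDF z * psiDeriv M m δ (Xstage M c 1 z) * XstageDeriv M c 1 z)
          / (∫ z : ℝ, stdNormalPDF z * XstageDeriv M c 1 z)
        = m * (stdNormalCDF M + (1 - stdNormalCDF M) * (1 - δ) * (1 - c))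
            / (stdNormalCDF M + (1 - stdNormalCDF M) * (1 - c)))
    ∧ 0 < ((∫ z : ℝ, stdNormalPDF z * psiDeriv M m δ (Xstage M c 1 z) * XstageDeriv M c 1 z)
            / (∫ z : ℝ, stdNormalPDF z * XstageDeriv M c 1 z))
          - ∫ z : ℝ, stdNormalPDF z * psiDeriv M m δ (Xstage M c 0 z) := by
  obtain ⟨hδ0, hδ1⟩ := hδ
  obtain ⟨hc0, hc1⟩ := hc
  set P := stdNormalCDF M with hP
  obtain ⟨hP0, hP1⟩ := stdCDF_mem M
  -- rewrite the three integrands into `stdKey` form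
  have e0 : (∫ z : ℝ, stdNormalPDF z * psiDeriv M m δ (Xstage M c 0 z))
      = ∫ z : ℝ, stdNormalPDF z * (if z < M then m else m * (1 - δ)) := by
    refine integral_congr_ae (Filter.Eventually.of_forall fun z => ?_)
    simp [Xstage, psiDeriv]
  have hX1 : ∀ z : ℝ, psiDeriv M m δ (Xstage M c 1 z) = if z < M then m else m * (1 - δ) := by
    intro z
    simp only [Xstage, psiDeriv, if_neg (one_ne_zero)]
    by_cases h : z < M
    · simp only [if_pos h]
    · have h2 : ¬ (z - (z - M) * c < M) := by
        push_neg at h ⊢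
        nlinarith
      simp only [if_neg h, if_neg h2]
  have e1 : (∫ z : ℝ, stdNormalPDF z * psiDeriv M m δ (Xstage M c 1 z) * XstageDeriv M c 1 z)
      = ∫ z : ℝ, stdNormalPDF z * (if z < M then m else m * (1 - δ) * (1 - c)) := by
    refine integral_congr_ae (Filter.Eventually.of_forall fun z => ?_)
    simp only [Xstage, psiDeriv, XstageDeriv, if_neg (one_ne_zero)]
    by_cases h : z < M
    · simp [h]
    · have h2 : ¬ (z - (z - M) * c < M) := by push_neg at h ⊢; nlinarith
      simp only [if_neg h, if_neg h2]; ring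
  have e2 : (∫ z : ℝ, stdNormalPDF z * XstageDeriv M c 1 z)
      = ∫ z : ℝ, stdNormalPDF z * (if z < M then 1 else 1 - c) := by
    refine integral_congr_ae (Filter.Eventually.of_forall fun z => ?_)
    simp only [XstageDeriv, if_neg (one_ne_zero)]
  rw [e0, e1, e2, stdKey, stdKey, stdKey]
  have hD : 0 < 1 * P + (1 - c) * (1 - P) := by nlinarith
  have hD' : P + (1 - P) * (1 - c) ≠ 0 := by intro h; nlinarith
  constructor
  · ring
  constructor
  · rw [div_eq_div_iff (by linarith) (by intro h; nlinarith)]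
    ring
  · rw [sub_pos, lt_div_iff₀ hD]
    nlinarith [mul_pos (mul_pos hm (mul_pos hδ0 hc0)) (mul_pos hP0 (by linarith : (0:ℝ) < 1 - P))]
end
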